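/- arXiv:2506.14480 — 5 statements merged into one kernel-verified Lean document; each statement's English description precedes it below -/
import Mathlib

section
/- For all real α, β, the 5×5 matrix M_{α,β} with upper-left 2×2 block [[cosh(α)cosh(β), sinh(α)sinh(β)],[sinh(α)sinh(β), cosh(α)cosh(β)]] and diagonal entries cosh(β), cosh(α), 1 in positions (3,3), (4,4), (5,5) (all other entries zero) maps the Lorentz cone L_4 into itself. -/
open Real

set_option maxHeartbeats 1000000

/-- The 5×5 matrix `M_{α,β}` from the paper. -/
noncomputable def Mab (α β : ℝ) : Matrix (Fin 5) (Fin 5) ℝ :=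
  !![cosh α * cosh β, sinh α * sinh β, 0, 0, 0;
     sinh α * sinh β, cosh α * cosh β, 0, 0, 0;
     0, 0, cosh β, 0, 0;
     0, 0, 0, cosh α, 0;
     0, 0, 0, 0, 1]

/-- For all real `α, β`, the matrix `M_{α,β}` maps the Lorentz cone `L_4 ⊆ ℝ^5`
(first coordinate is the time coordinate) into itself. -/
theorem Mab_maps_lorentzCone (α β : ℝ) (v : Fin 5 → ℝ)
    (hv : Real.sqrt ((v 1) ^ 2 + (v 2) ^ 2 + (v 3) ^ 2 + (v 4) ^ 2) ≤ v 0) :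
    Real.sqrt (((Mab α β).mulVec v 1) ^ 2 + ((Mab α β).mulVec v 2) ^ 2 +
        ((Mab α β).mulVec v 3) ^ 2 + ((Mab α β).mulVec v 4) ^ 2) ≤
      (Mab α β).mulVec v 0 := by
  have e0 : (Mab α β).mulVec v 0 = cosh α * cosh β * v 0 + sinh α * sinh β * v 1 := by
    simp [Mab, Matrix.mulVec, dotProduct, Fin.sum_univ_five]
  have e1 : (Mab α β).mulVec v 1 = sinh α * sinh β * v 0 + cosh α * cosh β * v 1 := by
    simp [Mab, Matrix.mulVec, dotProduct, Fin.sum_univ_five]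
  have e2 : (Mab α β).mulVec v 2 = cosh β * v 2 := by
    simp [Mab, Matrix.mulVec, dotProduct, Fin.sum_univ_five,
      Matrix.cons_val_two, Matrix.tail_cons]
  have e3 : (Mab α β).mulVec v 3 = cosh α * v 3 := by
    simp [Mab, Matrix.mulVec, dotProduct, Fin.sum_univ_five,
      Matrix.cons_val_three, Matrix.tail_cons]
  have e4 : (Mab α β).mulVec v 4 = v 4 := by
    simp [Mab, Matrix.mulVec, dotProduct, Fin.sum_univ_five,
      Matrix.cons_val_four, Matrix.tail_cons]
  rw [e0, e1, e2, e3, e4]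
  have ht : 0 ≤ v 0 := le_trans (Real.sqrt_nonneg _) hv
  have hnn : 0 ≤ (v 1) ^ 2 + (v 2) ^ 2 + (v 3) ^ 2 + (v 4) ^ 2 := by positivity
  have hsq : (v 1) ^ 2 + (v 2) ^ 2 + (v 3) ^ 2 + (v 4) ^ 2 ≤ (v 0) ^ 2 := by
    nlinarith [Real.sq_sqrt hnn, Real.sqrt_nonneg ((v 1) ^ 2 + (v 2) ^ 2 + (v 3) ^ 2 + (v 4) ^ 2)]
  have ha : Real.cosh α ^ 2 = Real.sinh α ^ 2 + 1 := Real.cosh_sq α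
  have hb : Real.cosh β ^ 2 = Real.sinh β ^ 2 + 1 := Real.cosh_sq β
  have hca : 0 < Real.cosh α := Real.cosh_pos α
  have hcb : 0 < Real.cosh β := Real.cosh_pos β
  have hprod : Real.cosh α ^ 2 * Real.cosh β ^ 2
      = (Real.sinh α ^ 2 + 1) * (Real.sinh β ^ 2 + 1) := by rw [ha, hb]
  have hcs : (Real.sinh α * Real.sinh β) ^ 2 + 1 ≤ (Real.cosh α * Real.cosh β) ^ 2 := by
    nlinarith [sq_nonneg (Real.sinh α), sq_nonneg (Real.sinh β)]
  set c : ℝ := Real.cosh α * Real.cosh β with hc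
  set s : ℝ := Real.sinh α * Real.sinh β with hs
  have hx1 : (v 1) ^ 2 ≤ (v 0) ^ 2 := by nlinarith [sq_nonneg (v 2), sq_nonneg (v 3), sq_nonneg (v 4)]
  have hw0 : 0 ≤ c * v 0 + s * v 1 := by
    by_contra hneg
    push_neg at hneg
    have h1 : 0 ≤ (c * v 0 + s * v 1) * (c * v 0 - s * v 1) := by
      have e : (c * v 0 + s * v 1) * (c * v 0 - s * v 1)
          = c ^ 2 * ((v 0) ^ 2 - (v 1) ^ 2) + (c ^ 2 - s ^ 2) * (v 1) ^ 2 := by ring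
      rw [e]
      have t1 : 0 ≤ c ^ 2 * ((v 0) ^ 2 - (v 1) ^ 2) :=
        mul_nonneg (sq_nonneg c) (by linarith)
      have t2 : 0 ≤ (c ^ 2 - s ^ 2) * (v 1) ^ 2 :=
        mul_nonneg (by linarith) (sq_nonneg (v 1))
      linarith
    have h2 : 0 < c * v 0 - s * v 1 := by
      have : 0 ≤ c * v 0 := mul_nonneg (by positivity) ht
      linarith
    have := mul_neg_of_neg_of_pos hneg h2
    linarith
  have key : (s * v 0 + c * v 1) ^ 2 + (Real.cosh β * v 2) ^ 2 + (Real.cosh α * v 3) ^ 2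
      + (v 4) ^ 2 ≤ (c * v 0 + s * v 1) ^ 2 := by
    have expand : (c * v 0 + s * v 1) ^ 2 - (s * v 0 + c * v 1) ^ 2
        = (c ^ 2 - s ^ 2) * ((v 0) ^ 2 - (v 1) ^ 2) := by ring
    have hAB : c ^ 2 - s ^ 2 = Real.cosh α ^ 2 + Real.cosh β ^ 2 - 1 := by
      have hcc : (Real.cosh α * Real.cosh β) ^ 2
          = (Real.sinh α ^ 2 + 1) * (Real.sinh β ^ 2 + 1) := by rw [mul_pow, ha, hb]
      rw [hc, hs, hcc, ha, hb]; ring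
    have h01 : (v 2) ^ 2 + (v 3) ^ 2 + (v 4) ^ 2 ≤ (v 0) ^ 2 - (v 1) ^ 2 := by linarith
    have hA1 : 1 ≤ Real.cosh α ^ 2 := by
      have := sq_nonneg (Real.sinh α); linarith
    have hB1 : 1 ≤ Real.cosh β ^ 2 := by
      have := sq_nonneg (Real.sinh β); linarith
    have expand2 : (c * v 0 + s * v 1) ^ 2 - (s * v 0 + c * v 1) ^ 2
        = (Real.cosh α ^ 2 + Real.cosh β ^ 2 - 1) * ((v 0) ^ 2 - (v 1) ^ 2) := by
      rw [← hAB]; exact expand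
    nlinarith [expand2, mul_nonneg (sq_nonneg (v 2)) (sub_nonneg.mpr hA1),
      mul_nonneg (sq_nonneg (v 3)) (sub_nonneg.mpr hB1),
      mul_nonneg (sq_nonneg (v 4)) (by linarith : (0:ℝ) ≤ Real.cosh α ^ 2 + Real.cosh β ^ 2 - 2),
      mul_le_mul_of_nonneg_left h01 (by linarith : (0:ℝ) ≤ Real.cosh α ^ 2 + Real.cosh β ^ 2 - 1)]
  calc Real.sqrt ((s * v 0 + c * v 1) ^ 2 + (Real.cosh β * v 2) ^ 2
        + (Real.cosh α * v 3) ^ 2 + (v 4) ^ 2)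
      ≤ Real.sqrt ((c * v 0 + s * v 1) ^ 2) := Real.sqrt_le_sqrt key
    _ = c * v 0 + s * v 1 := Real.sqrt_sq hw0
end

section
/- For all real α, β, one has M_{α,β}^T J M_{α,β} − (cosh(α)² + cosh(β)² − 1) J is positive semidefinite, where J = diag(1,−1,−1,−1,−1) and M_{α,β} is the 5×5 matrix with upper-left 2×2 block [[cosh(α)cosh(β), sinh(α)sinh(β)],[sinh(α)sinh(β), cosh(α)cosh(β)]], diagonal entries cosh(β), cosh(α), 1 in positions (3,3),(4,4),(5,5), and zeros elsewhere. -/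
open Real Matrix

/-- The matrix `J = diag(1,-1,-1,-1,-1)`. -/
def Jmat : Matrix (Fin 5) (Fin 5) ℝ :=
  Matrix.diagonal ![1, -1, -1, -1, -1]

set_option maxHeartbeats 1000000 in
/-- For all real `α, β`, the matrix `M_{α,β}ᵀ J M_{α,β} - (cosh(α)² + cosh(β)² - 1) J`
is positive semidefinite (all quadratic form values are nonnegative on ℝ^5). -/
theorem Mab_J_inequality (α β : ℝ) (x : Fin 5 → ℝ) :
    0 ≤ x ⬝ᵥ (((Mab α β)ᵀ * Jmat * (Mab α β) -
        (Real.cosh α ^ 2 + Real.cosh β ^ 2 - 1) • Jmat).mulVec x) := by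
  have hT : (Mab α β)ᵀ = Mab α β := by
    ext i j; fin_cases i <;> fin_cases j <;> simp [Mab, vecHead, vecTail]
  have hJ : Jmat = !![1,0,0,0,0; 0,-1,0,0,0; 0,0,-1,0,0; 0,0,0,-1,0; 0,0,0,0,-1] := by
    ext i j; fin_cases i <;> fin_cases j <;>
      simp [Jmat, Matrix.diagonal, vecHead, vecTail]
  rw [hT, hJ]
  have ha := Real.cosh_sq α
  have hb := Real.cosh_sq β
  have ha1 := Real.one_le_cosh α
  have hb1 := Real.one_le_cosh β
  simp [Mab, mulVec, dotProduct, Fin.sum_univ_five, Matrix.mul_apply,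
    Matrix.sub_apply, Matrix.smul_apply, vecHead, vecTail, Function.comp]
  have key : (Real.cosh α * Real.cosh β) * (Real.cosh α * Real.cosh β) -
      (Real.sinh α * Real.sinh β) * (Real.sinh α * Real.sinh β) =
      Real.cosh α ^ 2 + Real.cosh β ^ 2 - 1 := by
    have ha' : Real.sinh α ^ 2 = Real.cosh α ^ 2 - 1 := by linarith
    have hb' : Real.sinh β ^ 2 = Real.cosh β ^ 2 - 1 := by linarith
    have : Real.sinh α * Real.sinh β * (Real.sinh α * Real.sinh β) =
        (Real.cosh α ^ 2 - 1) * (Real.cosh β ^ 2 - 1) := by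
      rw [show Real.sinh α * Real.sinh β * (Real.sinh α * Real.sinh β) =
        Real.sinh α ^ 2 * Real.sinh β ^ 2 by ring, ha', hb']
    rw [this]; ring
  have h1 : (0:ℝ) ≤ Real.cosh α ^ 2 - 1 := by nlinarith
  have h2 : (0:ℝ) ≤ Real.cosh β ^ 2 - 1 := by nlinarith
  have e : x 0 *
              ((cosh α * cosh β * (cosh α * cosh β) + -(sinh α * sinh β * (sinh α * sinh β)) -
                    (cosh α ^ 2 + cosh β ^ 2 - 1)) *
                  x 0 +
                (cosh α * cosh β * (sinh α * sinh β) + -(sinh α * sinh β * (cosh α * cosh β))) * x 1) +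
            x 1 *
              ((sinh α * sinh β * (cosh α * cosh β) + -(cosh α * cosh β * (sinh α * sinh β))) * x 0 +
                (sinh α * sinh β * (sinh α * sinh β) + -(cosh α * cosh β * (cosh α * cosh β)) -
                    (1 - (cosh α ^ 2 + cosh β ^ 2))) *
                  x 1) +
          x 2 * ((-(cosh β * cosh β) - (1 - (cosh α ^ 2 + cosh β ^ 2))) * x 2) +
        x 3 * ((-(cosh α * cosh α) - (1 - (cosh α ^ 2 + cosh β ^ 2))) * x 3) +
      x 4 * ((-1 - (1 - (cosh α ^ 2 + cosh β ^ 2))) * x 4)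
      = (Real.cosh α ^ 2 - 1) * x 2 ^ 2 + (Real.cosh β ^ 2 - 1) * x 3 ^ 2 +
        ((Real.cosh α ^ 2 - 1) + (Real.cosh β ^ 2 - 1)) * x 4 ^ 2 := by
    linear_combination (x 0 * x 0 - x 1 * x 1) * key
  rw [e]
  positivity
end

section
/- Let w ∈ ℝ^k with ‖w‖₂ = 1, and suppose (x,b) ∈ ℝ × ℝ^k satisfies both 1 − x ≥ ‖b − w‖₂ and 1 + x ≥ ‖b + w‖₂. Then (x,b) = α(1,w) for some α ∈ [−1,1]. -/
/-- If `‖w‖₂ = 1` and `(x,b)` satisfies `1 - x ≥ ‖b - w‖₂` and `1 + x ≥ ‖b + w‖₂`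
(i.e. `(1,w) ± (x,b)` lies in the Lorentz cone), then `(x,b) = α(1,w)` for some
`α ∈ [-1,1]`. -/
theorem extremal_ray_pinching {k : ℕ} (w b : EuclideanSpace ℝ (Fin k)) (x : ℝ)
    (hw : ‖w‖ = 1) (h1 : ‖b - w‖ ≤ 1 - x) (h2 : ‖b + w‖ ≤ 1 + x) :
    ∃ α ∈ Set.Icc (-1 : ℝ) 1, x = α ∧ b = α • w := by
  have hn1 : (0:ℝ) ≤ ‖b - w‖ := norm_nonneg _
  have hn2 : (0:ℝ) ≤ ‖b + w‖ := norm_nonneg _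
  have htri : (2:ℝ) ≤ ‖b + w‖ + ‖b - w‖ := by
    have : ‖(b + w) - (b - w)‖ ≤ ‖b + w‖ + ‖b - w‖ := norm_sub_le _ _
    have he : (b + w) - (b - w) = (2:ℝ) • w := by module
    rw [he, norm_smul] at this
    simpa [hw] using this
  have hbw : ‖b + w‖ = 1 + x := by linarith
  have hwb : ‖b - w‖ = 1 - x := by linarith
  have e1 : ‖b + w‖^2 = ‖b‖^2 + 2 * inner ℝ b w + ‖w‖^2 := norm_add_sq_real b w
  have e2 : ‖b - w‖^2 = ‖b‖^2 - 2 * inner ℝ b w + ‖w‖^2 := norm_sub_sq_real b w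
  have hib : (inner ℝ b w : ℝ) = x := by nlinarith
  have hbb : ‖b‖^2 = x^2 := by nlinarith
  have hz : ‖b - x • w‖^2 = 0 := by
    have := norm_sub_sq_real b (x • w)
    rw [norm_smul, real_inner_smul_right] at this
    have : ‖b - x • w‖^2 = ‖b‖^2 - 2 * (x * inner ℝ b w) + (|x| * ‖w‖)^2 := this
    rw [this, hib, hbb, hw]
    rw [mul_one, sq_abs]
    ring
  have hb : b = x • w := by
    have := (norm_eq_zero).mp (by nlinarith [norm_nonneg (b - x • w)] : ‖b - x • w‖ = 0)
    exact sub_eq_zero.mp this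
  exact ⟨x, ⟨by linarith, by linarith⟩, rfl, hb⟩
end

section
/- Let v₁, v₂ : ℝ^n → ℝ^m be linear maps with Frobenius norms hs(v₁) ≤ s and hs(v₂) ≤ t, written in block form v₁ = [[r₁, x₁ᵀ],[y₁, V₁]] and v₂ = [[r₂, x₂ᵀ],[y₂, V₂]]. Then for all real α, β: s·t·cosh(α)cosh(β) + r₁r₂·cosh(α)cosh(β) + (s·r₂ + t·r₁)·sinh(α)sinh(β) + ⟨x₁,x₂⟩·cosh(β) + ⟨y₁,y₂⟩·cosh(α) + Tr(V₁ᵀV₂) ≥ 0. -/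
open Real

set_option maxHeartbeats 1000000 in
/-- Scalar core of the boost positivity inequality. -/
private lemma boost_scalar (s t r₁ r₂ X₁ X₂ Y₁ Y₂ W₁ W₂ P Q T a b sa sb : ℝ)
    (hs0 : 0 ≤ s) (ht0 : 0 ≤ t)
    (hX₁0 : 0 ≤ X₁) (hX₂0 : 0 ≤ X₂) (hY₁0 : 0 ≤ Y₁) (hY₂0 : 0 ≤ Y₂)
    (hW₁0 : 0 ≤ W₁) (hW₂0 : 0 ≤ W₂)
    (h1 : r₁ ^ 2 + X₁ + Y₁ + W₁ ≤ s ^ 2) (h2 : r₂ ^ 2 + X₂ + Y₂ + W₂ ≤ t ^ 2)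
    (hP : -P ≤ Real.sqrt X₁ * Real.sqrt X₂)
    (hQ : -Q ≤ Real.sqrt Y₁ * Real.sqrt Y₂)
    (hT : -T ≤ Real.sqrt W₁ * Real.sqrt W₂)
    (ha1 : 1 ≤ a) (hb1 : 1 ≤ b)
    (hca : a ^ 2 - sa ^ 2 = 1) (hcb : b ^ 2 - sb ^ 2 = 1)
    (hcadd : 1 ≤ a * b + sa * sb) (hcsub : 1 ≤ a * b - sa * sb) :
    0 ≤ s * t * (a * b) + r₁ * r₂ * (a * b) + (s * r₂ + t * r₁) * (sa * sb) +
        P * b + Q * a + T := by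
  have ha0 : 0 ≤ a := by linarith
  have hb0 : 0 ≤ b := by linarith
  set A := t * (a * b) + r₂ * (sa * sb) with hAdef
  set B := r₂ * (a * b) + t * (sa * sb) with hBdef
  have ht₂ : -t ≤ r₂ ∧ r₂ ≤ t := abs_le.mp (by
    rw [← Real.sqrt_sq ht0, ← Real.sqrt_sq_eq_abs]
    exact Real.sqrt_le_sqrt (by linarith))
  have hA0 : 0 ≤ A := by
    have u1 : 0 ≤ (t + r₂) * (a * b + sa * sb) :=
      mul_nonneg (by linarith [ht₂.1]) (by linarith)
    have u2 : 0 ≤ (t - r₂) * (a * b - sa * sb) :=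
      mul_nonneg (by linarith [ht₂.2]) (by linarith)
    rw [hAdef]; linarith [u1, u2]
  have ha2 : 1 ≤ a ^ 2 := one_le_pow₀ ha1
  have hb2 : 1 ≤ b ^ 2 := one_le_pow₀ hb1
  have h2' : X₂ + Y₂ + W₂ ≤ t ^ 2 - r₂ ^ 2 := by linarith
  have e1 : A ^ 2 - B ^ 2 = (t ^ 2 - r₂ ^ 2) * (a ^ 2 + b ^ 2 - 1) := by
    rw [hAdef, hBdef]
    linear_combination (t ^ 2 - r₂ ^ 2) * (b ^ 2 - 1) * hca +
      (t ^ 2 - r₂ ^ 2) * sa ^ 2 * hcb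
  have e2 : b ^ 2 * X₂ + a ^ 2 * Y₂ + W₂ ≤ (X₂ + Y₂ + W₂) * (a ^ 2 + b ^ 2 - 1) := by
    linarith [mul_nonneg hX₂0 (sub_nonneg.2 ha2), mul_nonneg hY₂0 (sub_nonneg.2 hb2),
      mul_nonneg hW₂0 (sub_nonneg.2 ha2), mul_nonneg hW₂0 (sub_nonneg.2 hb2)]
  have e3 : (X₂ + Y₂ + W₂) * (a ^ 2 + b ^ 2 - 1) ≤ (t ^ 2 - r₂ ^ 2) * (a ^ 2 + b ^ 2 - 1) :=
    mul_le_mul_of_nonneg_right h2' (by linarith)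
  have hkey : B ^ 2 + b ^ 2 * X₂ + a ^ 2 * Y₂ + W₂ ≤ A ^ 2 := by linarith
  have hr : -(r₁ * B) ≤ Real.sqrt (r₁ ^ 2) * Real.sqrt (B ^ 2) := by
    rw [Real.sqrt_sq_eq_abs, Real.sqrt_sq_eq_abs, ← abs_mul]
    exact neg_le_abs _
  have h4 : Real.sqrt (r₁ ^ 2) * Real.sqrt (B ^ 2) + Real.sqrt X₁ * Real.sqrt (b ^ 2 * X₂) +
      Real.sqrt Y₁ * Real.sqrt (a ^ 2 * Y₂) + Real.sqrt W₁ * Real.sqrt W₂ ≤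
      Real.sqrt (r₁ ^ 2 + X₁ + Y₁ + W₁) *
        Real.sqrt (B ^ 2 + b ^ 2 * X₂ + a ^ 2 * Y₂ + W₂) := by
    have h := Real.sum_sqrt_mul_sqrt_le (Finset.univ : Finset (Fin 4))
      (f := ![r₁ ^ 2, X₁, Y₁, W₁]) (g := ![B ^ 2, b ^ 2 * X₂, a ^ 2 * Y₂, W₂])
      (by intro i
          fin_cases i
          · simpa using sq_nonneg r₁
          · simpa using hX₁0
          · simpa using hY₁0
          · simpa using hW₁0)
      (by intro i
          fin_cases i
          · simpa using sq_nonneg B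
          · simpa using mul_nonneg (sq_nonneg b) hX₂0
          · simpa using mul_nonneg (sq_nonneg a) hY₂0
          · simpa using hW₂0)
    simpa [Fin.sum_univ_four, add_assoc] using h
  have hsq1 : Real.sqrt (r₁ ^ 2 + X₁ + Y₁ + W₁) ≤ s := by
    calc Real.sqrt (r₁ ^ 2 + X₁ + Y₁ + W₁) ≤ Real.sqrt (s ^ 2) := Real.sqrt_le_sqrt h1
    _ = s := Real.sqrt_sq hs0
  have hsq2 : Real.sqrt (B ^ 2 + b ^ 2 * X₂ + a ^ 2 * Y₂ + W₂) ≤ A := by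
    calc Real.sqrt (B ^ 2 + b ^ 2 * X₂ + a ^ 2 * Y₂ + W₂) ≤ Real.sqrt (A ^ 2) :=
      Real.sqrt_le_sqrt hkey
    _ = A := Real.sqrt_sq hA0
  have hprod : Real.sqrt (r₁ ^ 2 + X₁ + Y₁ + W₁) *
      Real.sqrt (B ^ 2 + b ^ 2 * X₂ + a ^ 2 * Y₂ + W₂) ≤ s * A :=
    mul_le_mul hsq1 hsq2 (Real.sqrt_nonneg _) hs0
  have hbX : Real.sqrt (b ^ 2 * X₂) = b * Real.sqrt X₂ := by
    rw [Real.sqrt_mul (sq_nonneg b), Real.sqrt_sq hb0]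
  have haY : Real.sqrt (a ^ 2 * Y₂) = a * Real.sqrt Y₂ := by
    rw [Real.sqrt_mul (sq_nonneg a), Real.sqrt_sq ha0]
  rw [hbX, haY] at h4
  have hPb : -(P * b) ≤ Real.sqrt X₁ * (b * Real.sqrt X₂) := by
    have h := mul_le_mul_of_nonneg_left hP hb0
    linarith [h]
  have hQa : -(Q * a) ≤ Real.sqrt Y₁ * (a * Real.sqrt Y₂) := by
    have h := mul_le_mul_of_nonneg_left hQ ha0
    linarith [h]
  have hfinal : 0 ≤ s * A + (r₁ * B + P * b + Q * a + T) := by linarith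
  rw [hAdef, hBdef] at hfinal
  linarith [hfinal]

/-- The positivity inequality `Tr[(s ⊕ v₁ᵀ) P_α (t ⊕ v₂) Q_β] ≥ 0` for central maps with
Hilbert-Schmidt norms `hs(v₁) ≤ s`, `hs(v₂) ≤ t` and Lorentz boosts `P_α, Q_β`, written out
in block coordinates `vₐ = [[rₐ, xₐᵀ],[yₐ, Vₐ]]`. -/
theorem boost_trace_nonneg {m n : ℕ} (s t : ℝ) (hs0 : 0 ≤ s) (ht0 : 0 ≤ t)
    (v₁ v₂ : Matrix (Fin (m + 1)) (Fin (n + 1)) ℝ)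
    (hv₁ : Real.sqrt (∑ i, ∑ j, v₁ i j ^ 2) ≤ s)
    (hv₂ : Real.sqrt (∑ i, ∑ j, v₂ i j ^ 2) ≤ t)
    (α β : ℝ) :
    0 ≤ s * t * (cosh α * cosh β) + v₁ 0 0 * v₂ 0 0 * (cosh α * cosh β) +
        (s * v₂ 0 0 + t * v₁ 0 0) * (sinh α * sinh β) +
        (∑ j : Fin n, v₁ 0 j.succ * v₂ 0 j.succ) * cosh β +
        (∑ i : Fin m, v₁ i.succ 0 * v₂ i.succ 0) * cosh α +
        ∑ i : Fin m, ∑ j : Fin n, v₁ i.succ j.succ * v₂ i.succ j.succ := by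
  have hsum : ∀ v : Matrix (Fin (m + 1)) (Fin (n + 1)) ℝ,
      (∑ i, ∑ j, v i j ^ 2) = v 0 0 ^ 2 + (∑ j : Fin n, v 0 j.succ ^ 2) +
        (∑ i : Fin m, v i.succ 0 ^ 2) + ∑ i : Fin m, ∑ j : Fin n, v i.succ j.succ ^ 2 := by
    intro v
    simp_rw [Fin.sum_univ_succ]
    rw [Finset.sum_add_distrib]
    ring
  have hS1 : (0:ℝ) ≤ ∑ i, ∑ j, v₁ i j ^ 2 :=
    Finset.sum_nonneg fun i _ => Finset.sum_nonneg fun j _ => sq_nonneg _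
  have hS2 : (0:ℝ) ≤ ∑ i, ∑ j, v₂ i j ^ 2 :=
    Finset.sum_nonneg fun i _ => Finset.sum_nonneg fun j _ => sq_nonneg _
  have h1 : v₁ 0 0 ^ 2 + (∑ j : Fin n, v₁ 0 j.succ ^ 2) + (∑ i : Fin m, v₁ i.succ 0 ^ 2) +
      (∑ i : Fin m, ∑ j : Fin n, v₁ i.succ j.succ ^ 2) ≤ s ^ 2 := by
    have h := pow_le_pow_left₀ (Real.sqrt_nonneg _) hv₁ 2
    rw [Real.sq_sqrt hS1, hsum] at h
    exact h
  have h2 : v₂ 0 0 ^ 2 + (∑ j : Fin n, v₂ 0 j.succ ^ 2) + (∑ i : Fin m, v₂ i.succ 0 ^ 2) +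
      (∑ i : Fin m, ∑ j : Fin n, v₂ i.succ j.succ ^ 2) ≤ t ^ 2 := by
    have h := pow_le_pow_left₀ (Real.sqrt_nonneg _) hv₂ 2
    rw [Real.sq_sqrt hS2, hsum] at h
    exact h
  have hP : -(∑ j : Fin n, v₁ 0 j.succ * v₂ 0 j.succ) ≤
      Real.sqrt (∑ j : Fin n, v₁ 0 j.succ ^ 2) * Real.sqrt (∑ j : Fin n, v₂ 0 j.succ ^ 2) := by
    have h := Real.sum_mul_le_sqrt_mul_sqrt (Finset.univ : Finset (Fin n))
      (fun j => -(v₁ 0 j.succ)) (fun j => v₂ 0 j.succ)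
    simpa [neg_mul, Finset.sum_neg_distrib] using h
  have hQ : -(∑ i : Fin m, v₁ i.succ 0 * v₂ i.succ 0) ≤
      Real.sqrt (∑ i : Fin m, v₁ i.succ 0 ^ 2) * Real.sqrt (∑ i : Fin m, v₂ i.succ 0 ^ 2) := by
    have h := Real.sum_mul_le_sqrt_mul_sqrt (Finset.univ : Finset (Fin m))
      (fun i => -(v₁ i.succ 0)) (fun i => v₂ i.succ 0)
    simpa [neg_mul, Finset.sum_neg_distrib] using h
  have hT : -(∑ i : Fin m, ∑ j : Fin n, v₁ i.succ j.succ * v₂ i.succ j.succ) ≤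
      Real.sqrt (∑ i : Fin m, ∑ j : Fin n, v₁ i.succ j.succ ^ 2) *
        Real.sqrt (∑ i : Fin m, ∑ j : Fin n, v₂ i.succ j.succ ^ 2) := by
    have h := Real.sum_mul_le_sqrt_mul_sqrt (Finset.univ : Finset (Fin m × Fin n))
      (fun p => -(v₁ p.1.succ p.2.succ)) (fun p => v₂ p.1.succ p.2.succ)
    simpa [neg_mul, Finset.sum_neg_distrib, Fintype.sum_prod_type] using h
  exact boost_scalar s t (v₁ 0 0) (v₂ 0 0) _ _ _ _ _ _ _ _ _
    (Real.cosh α) (Real.cosh β) (Real.sinh α) (Real.sinh β) hs0 ht0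
    (Finset.sum_nonneg fun j _ => sq_nonneg _) (Finset.sum_nonneg fun j _ => sq_nonneg _)
    (Finset.sum_nonneg fun i _ => sq_nonneg _) (Finset.sum_nonneg fun i _ => sq_nonneg _)
    (Finset.sum_nonneg fun i _ => Finset.sum_nonneg fun j _ => sq_nonneg _)
    (Finset.sum_nonneg fun i _ => Finset.sum_nonneg fun j _ => sq_nonneg _)
    h1 h2 hP hQ hT (Real.one_le_cosh α) (Real.one_le_cosh β)
    (Real.cosh_sq_sub_sinh_sq α) (Real.cosh_sq_sub_sinh_sq β)
    (by rw [← Real.cosh_add]; exact Real.one_le_cosh _)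
    (by rw [← Real.cosh_sub]; exact Real.one_le_cosh _)
end

section
/- The Banach-Mazur distance from ℓ₁^n to ℓ₂^n equals √n; equivalently, the Hilbert-space factorization norm of the identity map satisfies γ₂(id : ℓ₁^n → ℓ₁^n) = √n. -/
/-- `ℓ₁^n`: `ℝ^n` with the `ℓ1` norm. -/
abbrev ellOne (n : ℕ) := PiLp 1 (fun _ : Fin n => ℝ)

open Finset

noncomputable def sgn' (b : Bool) : ℝ := if b then 1 else -1

lemma sgn'_mul_self (b : Bool) : sgn' b * sgn' b = 1 := by cases b <;> simp [sgn']

lemma abs_sgn' (b : Bool) : |sgn' b| = 1 := by cases b <;> simp [sgn']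

lemma rademacher_sum {n : ℕ} {i j : Fin n} (hij : i ≠ j) :
    ∑ ε : Fin n → Bool, sgn' (ε i) * sgn' (ε j) = 0 := by
  set flip : (Fin n → Bool) → (Fin n → Bool) := fun ε => Function.update ε i (!(ε i)) with hflip
  have hinv : Function.Involutive flip := by
    intro ε
    funext m
    by_cases hm : m = i
    · subst hm; simp [hflip]
    · simp [hflip, Function.update_of_ne hm]
  have key := Fintype.sum_equiv (Function.Involutive.toPerm flip hinv)
    (fun ε => sgn' (ε i) * sgn' (ε j))
    (fun ε => -(sgn' (ε i) * sgn' (ε j))) ?_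
  · rw [Finset.sum_neg_distrib] at key
    linarith [key]
  · intro ε
    have h1 : (Function.Involutive.toPerm flip hinv ε) i = !(ε i) := by
      simp [Function.Involutive.toPerm, hflip]
    have h2 : (Function.Involutive.toPerm flip hinv ε) j = ε j := by
      simp [Function.Involutive.toPerm, hflip, Function.update_of_ne (Ne.symm hij)]
    simp only [h1, h2]
    cases ε i <;> cases ε j <;> simp [sgn']

lemma rademacher_orth {F : Type*} [NormedAddCommGroup F] [InnerProductSpace ℝ F]
    {n : ℕ} (u : Fin n → F) :
    ∑ ε : Fin n → Bool, ‖∑ i, sgn' (ε i) • u i‖ ^ 2 = 2 ^ n * ∑ i, ‖u i‖ ^ 2 := by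
  calc ∑ ε : Fin n → Bool, ‖∑ i, sgn' (ε i) • u i‖ ^ 2
      = ∑ ε : Fin n → Bool, ∑ i, ∑ j, (sgn' (ε i) * sgn' (ε j)) * (inner ℝ (u i) (u j) : ℝ) := by
        refine Finset.sum_congr rfl fun ε _ => ?_
        rw [← real_inner_self_eq_norm_sq, sum_inner]
        refine Finset.sum_congr rfl fun i _ => ?_
        rw [inner_sum]
        refine Finset.sum_congr rfl fun j _ => ?_
        rw [real_inner_smul_left, real_inner_smul_right]; ring
    _ = ∑ i, ∑ j, (∑ ε : Fin n → Bool, sgn' (ε i) * sgn' (ε j)) * (inner ℝ (u i) (u j) : ℝ) := by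
        simp_rw [Finset.sum_mul]
        rw [Finset.sum_comm]
        exact Finset.sum_congr rfl fun i _ => Finset.sum_comm
    _ = ∑ i, ∑ j, (if i = j then (2:ℝ)^n else 0) * (inner ℝ (u i) (u j) : ℝ) := by
        refine Finset.sum_congr rfl fun i _ => Finset.sum_congr rfl fun j _ => ?_
        congr 1
        by_cases h : i = j
        · subst h
          simp only [if_pos rfl, sgn'_mul_self, Finset.sum_const, card_univ, nsmul_eq_mul, mul_one]
          simp [Fintype.card_fun]
        · rw [if_neg h, rademacher_sum h]
    _ = 2 ^ n * ∑ i, ‖u i‖ ^ 2 := by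
        rw [Finset.mul_sum]
        refine Finset.sum_congr rfl fun i _ => ?_
        simp_rw [ite_mul, zero_mul, Finset.sum_ite_eq, mem_univ, if_pos]
        rw [real_inner_self_eq_norm_sq]


lemma gamma2_lower (n k : ℕ) (v₁ : ellOne n →L[ℝ] EuclideanSpace ℝ (Fin k))
    (v₂ : EuclideanSpace ℝ (Fin k) →L[ℝ] ellOne n)
    (h : ContinuousLinearMap.id ℝ (ellOne n) = v₂.comp v₁) :
    Real.sqrt n ≤ ‖v₁‖ * ‖v₂‖ := by
  set A := ‖v₁‖ with hA
  set B := ‖v₂‖ with hB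
  have hA0 : 0 ≤ A := norm_nonneg _
  have hB0 : 0 ≤ B := norm_nonneg _
  -- basis vectors and sign vectors in ℓ₁ⁿ
  set e : Fin n → ellOne n := fun i => (WithLp.equiv 1 _).symm (Pi.single i 1) with he
  set x : (Fin n → Bool) → ellOne n := fun ε => (WithLp.equiv 1 _).symm (fun i => sgn' (ε i)) with hx
  have hnorm_e : ∀ i, ‖e i‖ = 1 := by
    intro i
    rw [he]
    rw [PiLp.norm_eq_sum (by norm_num : 0 < (1 : ENNReal).toReal)]
    simp [Pi.single_apply, apply_ite]
  have hnorm_x : ∀ ε, ‖x ε‖ = n := by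
    intro ε
    rw [hx]
    rw [PiLp.norm_eq_sum (by norm_num : 0 < (1 : ENNReal).toReal)]
    simp [Real.norm_eq_abs, abs_sgn']
  have hx_eq : ∀ ε, x ε = ∑ i, sgn' (ε i) • e i := by
    intro ε
    apply (WithLp.linearEquiv 1 ℝ (Fin n → ℝ)).injective
    rw [map_sum]
    simp_rw [map_smul]
    rw [hx, he]
    simp only [WithLp.linearEquiv_apply, WithLp.equiv_symm_apply, PiLp.toLp_apply]
    funext j
    simp [Finset.sum_apply, Pi.single_apply, WithLp.equiv_symm_apply, PiLp.toLp_apply]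
  have key1 : ∀ ε : Fin n → Bool, (n:ℝ) ≤ B * ‖v₁ (x ε)‖ := by
    intro ε
    have hid : x ε = v₂ (v₁ (x ε)) := by
      have := congrArg (fun f : ellOne n →L[ℝ] ellOne n => f (x ε)) h
      simpa using this
    calc (n:ℝ) = ‖x ε‖ := (hnorm_x ε).symm
      _ = ‖v₂ (v₁ (x ε))‖ := by rw [← hid]
      _ ≤ B * ‖v₁ (x ε)‖ := v₂.le_opNorm _
  have key2 : ∑ ε : Fin n → Bool, ‖v₁ (x ε)‖ ^ 2 = 2^n * ∑ i, ‖v₁ (e i)‖ ^ 2 := by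
    have hv : ∀ ε, v₁ (x ε) = ∑ i, sgn' (ε i) • v₁ (e i) := by
      intro ε; rw [hx_eq]; simp [map_sum, map_smul]
    simp_rw [hv]
    exact rademacher_orth _
  have key3 : ∑ i, ‖v₁ (e i)‖ ^ 2 ≤ n * A ^ 2 := by
    calc ∑ i, ‖v₁ (e i)‖ ^ 2 ≤ ∑ _i : Fin n, A ^ 2 := by
          refine Finset.sum_le_sum fun i _ => ?_
          have h1 : ‖v₁ (e i)‖ ≤ A := by
            have := v₁.le_opNorm (e i); rwa [hnorm_e i, mul_one] at this
          exact pow_le_pow_left₀ (norm_nonneg _) h1 2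
      _ = n * A ^ 2 := by simp [mul_comm]
  have hsum : (2:ℝ)^n * (n:ℝ)^2 ≤ B^2 * (2^n * (n * A^2)) := by
    calc (2:ℝ)^n * (n:ℝ)^2 = ∑ _ε : Fin n → Bool, (n:ℝ)^2 := by
          simp [Finset.sum_const, card_univ, Fintype.card_fun]
      _ ≤ ∑ ε : Fin n → Bool, (B * ‖v₁ (x ε)‖)^2 := by
          refine Finset.sum_le_sum fun ε _ => ?_
          exact pow_le_pow_left₀ (Nat.cast_nonneg n) (key1 ε) 2
      _ = B^2 * ∑ ε : Fin n → Bool, ‖v₁ (x ε)‖^2 := by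
          simp_rw [mul_pow]; rw [← Finset.mul_sum]
      _ ≤ B^2 * (2^n * (n * A^2)) := by
          rw [key2]
          refine mul_le_mul_of_nonneg_left ?_ (sq_nonneg B)
          exact mul_le_mul_of_nonneg_left key3 (by positivity)
  have h2n : (0:ℝ) < 2^n := by positivity
  rcases Nat.eq_zero_or_pos n with hn | hn
  · subst hn
    simpa using mul_nonneg hA0 hB0
  · have hnpos : (0:ℝ) < n := by exact_mod_cast hn
    have hsum' : (n:ℝ)^2 ≤ B^2*((n:ℝ)*A^2) := by
      have h2 : (2:ℝ)^n * ((n:ℝ)^2) ≤ 2^n * (B^2*((n:ℝ)*A^2)) := by linear_combination hsum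
      exact le_of_mul_le_mul_left h2 h2n
    have hfin : (n:ℝ) ≤ (A*B)^2 := by nlinarith [hsum', hnpos]
    calc Real.sqrt n ≤ Real.sqrt ((A*B)^2) := Real.sqrt_le_sqrt hfin
      _ = A*B := Real.sqrt_sq (by positivity)


lemma ellOne_norm_eq {n : ℕ} (x : ellOne n) : ‖x‖ = ∑ i, ‖x i‖ := by
  rw [PiLp.norm_eq_sum (by norm_num : 0 < (1 : ENNReal).toReal)]
  norm_num

noncomputable def oneToTwo (n : ℕ) : ellOne n →L[ℝ] EuclideanSpace ℝ (Fin n) :=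
  LinearMap.mkContinuous
    ((WithLp.linearEquiv 2 ℝ (Fin n → ℝ)).symm.toLinearMap ∘ₗ
      (WithLp.linearEquiv 1 ℝ (Fin n → ℝ)).toLinearMap) 1 (by
    intro x
    rw [one_mul, ellOne_norm_eq, EuclideanSpace.norm_eq]
    show Real.sqrt (∑ i, ‖x i‖ ^ 2) ≤ ∑ i, ‖x i‖
    have h1 : ∑ i, ‖x i‖ ^ 2 ≤ (∑ i, ‖x i‖) ^ 2 :=
      Finset.sum_sq_le_sq_sum_of_nonneg (fun i _ => norm_nonneg _)
    calc Real.sqrt (∑ i, ‖x i‖ ^ 2) ≤ Real.sqrt ((∑ i, ‖x i‖) ^ 2) := Real.sqrt_le_sqrt h1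
      _ = ∑ i, ‖x i‖ := Real.sqrt_sq (Finset.sum_nonneg fun i _ => norm_nonneg _))

noncomputable def twoToOne (n : ℕ) : EuclideanSpace ℝ (Fin n) →L[ℝ] ellOne n :=
  LinearMap.mkContinuous
    ((WithLp.linearEquiv 1 ℝ (Fin n → ℝ)).symm.toLinearMap ∘ₗ
      (WithLp.linearEquiv 2 ℝ (Fin n → ℝ)).toLinearMap) (Real.sqrt n) (by
    intro x
    rw [ellOne_norm_eq, EuclideanSpace.norm_eq]
    show ∑ i, ‖x i‖ ≤ Real.sqrt n * Real.sqrt (∑ i, ‖x i‖ ^ 2)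
    have h1 : (∑ i, ‖x i‖) ^ 2 ≤ (n : ℝ) * ∑ i, ‖x i‖ ^ 2 := by
      have := sq_sum_le_card_mul_sum_sq (s := (Finset.univ : Finset (Fin n)))
        (f := fun i => ‖x i‖)
      simpa using this
    calc ∑ i, ‖x i‖ = Real.sqrt ((∑ i, ‖x i‖) ^ 2) :=
          (Real.sqrt_sq (Finset.sum_nonneg fun i _ => norm_nonneg _)).symm
      _ ≤ Real.sqrt ((n : ℝ) * ∑ i, ‖x i‖ ^ 2) := Real.sqrt_le_sqrt h1
      _ = Real.sqrt n * Real.sqrt (∑ i, ‖x i‖ ^ 2) := Real.sqrt_mul (Nat.cast_nonneg n) _)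

lemma factor_id (n : ℕ) :
    ContinuousLinearMap.id ℝ (ellOne n) = (twoToOne n).comp (oneToTwo n) := by
  ext x
  rfl

lemma norm_oneToTwo_le (n : ℕ) : ‖oneToTwo n‖ ≤ 1 :=
  LinearMap.mkContinuous_norm_le _ zero_le_one _

lemma norm_twoToOne_le (n : ℕ) : ‖twoToOne n‖ ≤ Real.sqrt n :=
  LinearMap.mkContinuous_norm_le _ (Real.sqrt_nonneg n) _

/-- The Hilbert-space factorization norm `γ₂` of the identity on `ℓ₁^n` equals `√n`
(this is the Banach-Mazur distance `d(ℓ₁^n, ℓ₂^n)`). -/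
theorem gamma2_id_ellOne (n : ℕ) :
    sInf {c : ℝ | ∃ (k : ℕ) (v₁ : ellOne n →L[ℝ] EuclideanSpace ℝ (Fin k))
        (v₂ : EuclideanSpace ℝ (Fin k) →L[ℝ] ellOne n),
        ContinuousLinearMap.id ℝ (ellOne n) = v₂.comp v₁ ∧ c = ‖v₁‖ * ‖v₂‖} =
      Real.sqrt n := by
  set S := {c : ℝ | ∃ (k : ℕ) (v₁ : ellOne n →L[ℝ] EuclideanSpace ℝ (Fin k))
        (v₂ : EuclideanSpace ℝ (Fin k) →L[ℝ] ellOne n),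
        ContinuousLinearMap.id ℝ (ellOne n) = v₂.comp v₁ ∧ c = ‖v₁‖ * ‖v₂‖} with hS
  have hmem : (‖oneToTwo n‖ * ‖twoToOne n‖) ∈ S :=
    ⟨n, oneToTwo n, twoToOne n, factor_id n, rfl⟩
  have hlb : ∀ c ∈ S, Real.sqrt n ≤ c := by
    rintro c ⟨k, v₁, v₂, hfac, rfl⟩
    exact gamma2_lower n k v₁ v₂ hfac
  refine le_antisymm ?_ (le_csInf ⟨_, hmem⟩ hlb)
  have h1 : ‖oneToTwo n‖ * ‖twoToOne n‖ ≤ Real.sqrt n := by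
    calc ‖oneToTwo n‖ * ‖twoToOne n‖ ≤ 1 * Real.sqrt n :=
          mul_le_mul (norm_oneToTwo_le n) (norm_twoToOne_le n) (norm_nonneg _) zero_le_one
      _ = Real.sqrt n := one_mul _
  exact (csInf_le ⟨Real.sqrt n, hlb⟩ hmem).trans h1
end
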